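/- If A and B are two m × n matrices (with entries from any set) having the same multiset of entries, then there exist m × n matrices A' and B' such that: (i) for each row index i, the i-th row of A' and the i-th row of B' have the same multiset of entries; and (ii) for each column index j, the j-th column of A' has the same multiset of entries as the j-th column of A, and the j-th column of B' has the same multiset of entries as the j-th column of B. -/

import Mathlib

noncomputable def dtr {n : ℕ} [NeZero n] (u v : Fin n → ℝ) : ℝ :=
  Finset.univ.sup' Finset.univ_nonempty
    (fun p : Fin n × Fin n => |u p.1 - u p.2 - v p.1 + v p.2|)

open Finset in
private lemma singleton_sum {α β : Type*} (s : Finset β) (F : β → α) :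
    s.val.map F = ∑ b ∈ s, ({F b} : Multiset α) := by
  rw [Finset.sum_eq_multiset_sum,
    show Multiset.map (fun b => ({F b} : Multiset α)) s.val
      = (s.val.map F).map (fun a => ({a} : Multiset α)) from (Multiset.map_map _ _ _).symm,
    Multiset.sum_map_singleton]

open Finset in
private lemma hall_step {α : Type*} {n m : ℕ} (hm : 0 < m) (f g : Fin n → Multiset α)
    (hf : ∀ j, (f j).card = m) (hg : ∀ j, (g j).card = m)
    (hsum : ∑ j, f j = ∑ j, g j) :
    ∃ s t : Fin n → α, (∀ j, s j ∈ f j) ∧ (∀ j, t j ∈ g j) ∧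
      Finset.univ.val.map s = Finset.univ.val.map t := by
  classical
  set r : Fin n → Finset (Fin n) :=
    fun j => univ.filter (fun k => ∃ a ∈ f j, a ∈ g k) with hr
  have hall : ∀ S : Finset (Fin n), S.card ≤ (S.biUnion r).card := by
    intro S
    set T := S.biUnion r with hT
    have hle : (∑ j ∈ S, f j) ≤ ∑ k ∈ T, g k := by
      rw [Multiset.le_iff_count]
      intro a
      by_cases ha : a ∈ ∑ j ∈ S, f j
      · have hzero : Multiset.count a (∑ k ∈ univ \ T, g k) = 0 := by
          rw [Multiset.count_eq_zero]
          intro hmem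
          rw [Multiset.mem_sum] at hmem
          obtain ⟨k, hk, hak⟩ := hmem
          rw [Multiset.mem_sum] at ha
          obtain ⟨j, hj, haj⟩ := ha
          have hkT : k ∈ T := by
            rw [hT]
            exact mem_biUnion.2 ⟨j, hj, by
              rw [hr]; simp only [mem_filter, mem_univ, true_and]
              exact ⟨a, haj, hak⟩⟩
          rw [mem_sdiff] at hk
          exact hk.2 hkT
        have h1 : Multiset.count a (∑ k, g k) = Multiset.count a (∑ k ∈ T, g k) := by
          rw [← Finset.sum_sdiff (subset_univ T), Multiset.count_add, hzero, zero_add]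
        have h2 : Multiset.count a (∑ j ∈ S, f j) ≤ Multiset.count a (∑ j, f j) := by
          exact Multiset.count_le_of_le a (Finset.sum_le_sum_of_subset (subset_univ S))
        rw [hsum, h1] at h2
        exact h2
      · simp [Multiset.count_eq_zero_of_notMem ha]
    have hcard := Multiset.card_le_card hle
    have hcf : (∑ j ∈ S, f j).card = S.card * m := by
      rw [← Multiset.cardHom_apply, map_sum Multiset.cardHom]
      simp only [Multiset.cardHom_apply, hf, sum_const, smul_eq_mul]
    have hcg : (∑ k ∈ T, g k).card = T.card * m := by
      rw [← Multiset.cardHom_apply, map_sum Multiset.cardHom]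
      simp only [Multiset.cardHom_apply, hg, sum_const, smul_eq_mul]
    rw [hcf, hcg] at hcard
    exact Nat.le_of_mul_le_mul_right hcard hm
  obtain ⟨τ, hτinj, hτ⟩ := (Finset.all_card_le_biUnion_card_iff_exists_injective r).1 hall
  have hchoice : ∀ j, ∃ a, a ∈ f j ∧ a ∈ g (τ j) := by
    intro j
    have := hτ j
    rw [hr] at this
    simpa using this
  choose x hx1 hx2 using hchoice
  have hτbij : Function.Bijective τ := Finite.injective_iff_bijective.1 hτinj
  let e := Equiv.ofBijective τ hτbij
  refine ⟨x, fun k => x (e.symm k), hx1, ?_, ?_⟩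
  · intro k
    have : τ (e.symm k) = k := e.apply_symm_apply k
    have h := hx2 (e.symm k)
    rwa [show τ (e.symm k) = k from this] at h
  · have huniv : Finset.univ.val.map (⇑e.symm) = Finset.univ.val := by
      have := Finset.map_univ_equiv e.symm
      calc Finset.univ.val.map (⇑e.symm)
          = (Finset.univ.map e.symm.toEmbedding).val := rfl
        _ = Finset.univ.val := by rw [this]
    calc Finset.univ.val.map x
        = (Finset.univ.val.map (⇑e.symm)).map x := by rw [huniv]
      _ = Finset.univ.val.map (fun k => x (e.symm k)) := by
          rw [Multiset.map_map]; rfl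

open Finset in
private lemma cons_univ_map {α : Type*} {m : ℕ} (F : Fin (m + 1) → α) :
    Finset.univ.val.map F = F 0 ::ₘ Finset.univ.val.map (fun i : Fin m => F i.succ) := by
  rw [Fin.univ_succ, Finset.cons_val, Finset.map_val, Multiset.map_cons, Multiset.map_map]
  rfl

open Finset in
private lemma main_lemma {α : Type*} {n : ℕ} : ∀ (m : ℕ) (f g : Fin n → Multiset α),
    (∀ j, (f j).card = m) → (∀ j, (g j).card = m) → (∑ j, f j = ∑ j, g j) →
    ∃ A' B' : Fin m → Fin n → α,
      (∀ i, Finset.univ.val.map (fun j => A' i j) = Finset.univ.val.map (fun j => B' i j)) ∧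
      (∀ j, Finset.univ.val.map (fun i => A' i j) = f j) ∧
      (∀ j, Finset.univ.val.map (fun i => B' i j) = g j) := by
  classical
  intro m
  induction m with
  | zero =>
    intro f g hf hg _
    refine ⟨fun i => i.elim0, fun i => i.elim0, fun i => i.elim0, ?_, ?_⟩
    · intro j
      rw [Multiset.card_eq_zero.1 (hf j)]
      simp
    · intro j
      rw [Multiset.card_eq_zero.1 (hg j)]
      simp
  | succ m ih =>
    intro f g hf hg hsum
    obtain ⟨s, t, hs, ht, hst⟩ := hall_step (Nat.succ_pos m) f g hf hg hsum
    set f' : Fin n → Multiset α := fun j => (f j).erase (s j) with hf'def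
    set g' : Fin n → Multiset α := fun j => (g j).erase (t j) with hg'def
    have hfdec : ∀ j, f j = s j ::ₘ f' j := fun j => (Multiset.cons_erase (hs j)).symm
    have hgdec : ∀ j, g j = t j ::ₘ g' j := fun j => (Multiset.cons_erase (ht j)).symm
    have hf' : ∀ j, (f' j).card = m := by
      intro j
      have := hf j
      rw [hfdec j, Multiset.card_cons] at this
      omega
    have hg' : ∀ j, (g' j).card = m := by
      intro j
      have := hg j
      rw [hgdec j, Multiset.card_cons] at this
      omega
    have hsum' : ∑ j, f' j = ∑ j, g' j := by
      have h1 : ∑ j, f j = Finset.univ.val.map s + ∑ j, f' j := by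
        calc ∑ j, f j = ∑ j, ({s j} + f' j) := by
              refine Finset.sum_congr rfl fun j _ => ?_
              rw [hfdec j]; rfl
          _ = (∑ j, ({s j} : Multiset α)) + ∑ j, f' j := Finset.sum_add_distrib
          _ = Finset.univ.val.map s + ∑ j, f' j := by rw [← singleton_sum]
      have h2 : ∑ j, g j = Finset.univ.val.map t + ∑ j, g' j := by
        calc ∑ j, g j = ∑ j, ({t j} + g' j) := by
              refine Finset.sum_congr rfl fun j _ => ?_
              rw [hgdec j]; rfl
          _ = (∑ j, ({t j} : Multiset α)) + ∑ j, g' j := Finset.sum_add_distrib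
          _ = Finset.univ.val.map t + ∑ j, g' j := by rw [← singleton_sum]
      rw [h1, h2, hst] at hsum
      exact add_left_cancel hsum
    obtain ⟨A₀, B₀, hrow, hcolA, hcolB⟩ := ih f' g' hf' hg' hsum'
    set A' : Fin (m + 1) → Fin n → α := Fin.cons s A₀ with hA'
    set B' : Fin (m + 1) → Fin n → α := Fin.cons t B₀ with hB'
    refine ⟨A', B', ?_, ?_, ?_⟩
    · intro i
      refine Fin.cases ?_ ?_ i
      · simpa [hA', hB'] using hst
      · intro i
        simpa [hA', hB'] using hrow i
    · intro j
      rw [cons_univ_map (fun i => A' i j)]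
      simp only [hA', Fin.cons_zero, Fin.cons_succ]
      rw [hcolA j, ← hfdec j]
    · intro j
      rw [cons_univ_map (fun i => B' i j)]
      simp only [hB', Fin.cons_zero, Fin.cons_succ]
      rw [hcolB j, ← hgdec j]

open Finset in
private lemma prod_col_sum {α : Type*} {m n : ℕ} (M : Fin m → Fin n → α) :
    (Finset.univ.val.map fun p : Fin m × Fin n => M p.1 p.2) =
      ∑ j, Finset.univ.val.map (fun i => M i j) := by
  rw [singleton_sum]
  rw [← Finset.univ_product_univ, Finset.sum_product_right]
  exact Finset.sum_congr rfl fun j _ => (singleton_sum _ _).symm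

theorem stmt6 {m n : ℕ} {α : Type*} (A B : Fin m → Fin n → α)
    (h : (Finset.univ.val.map fun p : Fin m × Fin n => A p.1 p.2) =
         (Finset.univ.val.map fun p : Fin m × Fin n => B p.1 p.2)) :
    ∃ A' B' : Fin m → Fin n → α,
      (∀ i : Fin m,
        (Finset.univ.val.map fun j => A' i j) =
          (Finset.univ.val.map fun j => B' i j)) ∧
      (∀ j : Fin n,
        (Finset.univ.val.map fun i => A' i j) =
          (Finset.univ.val.map fun i => A i j)) ∧
      (∀ j : Fin n,
        (Finset.univ.val.map fun i => B' i j) =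
          (Finset.univ.val.map fun i => B i j)) := by
  have hsum : (∑ j, Finset.univ.val.map (fun i => A i j)) =
      ∑ j, Finset.univ.val.map (fun i => B i j) := by
    rw [← prod_col_sum, ← prod_col_sum, h]
  obtain ⟨A', B', h1, h2, h3⟩ := main_lemma m
    (fun j => Finset.univ.val.map (fun i => A i j))
    (fun j => Finset.univ.val.map (fun i => B i j))
    (fun j => by simp) (fun j => by simp) hsum
  exact ⟨A', B', h1, h2, h3⟩
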